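/- Let A be an invertible Hermitian n×n complex matrix with real eigenvalues (λ_i) (all nonzero) and a corresponding orthonormal basis of eigenvectors (u_i) (as provided by the spectral theorem for Hermitian matrices), and let V be a Hermitian n×n complex matrix. Then the real-valued function t ↦ ‖A + t·V‖₁ is twice differentiable at t = 0, and its second derivative at 0 equals Σ_{i,j} (1 − sgn(λ_i)·sgn(λ_j)) · |⟨u_i, V·u_j⟩|² / (|λ_i| + |λ_j|), where ⟨u, w⟩ := Σ_k conj(u_k)·w_k. In particular this second derivative is zero when A is positive definite. -/

import Mathlib

open Matrix
open scoped ComplexOrder Matrix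

/-- The matrix absolute value `|X|`: the unique positive semidefinite square root of `Xᴴ * X`. -/
noncomputable def matAbs {n : Type*} [Fintype n] [DecidableEq n] (X : Matrix n n ℂ) :
    Matrix n n ℂ :=
  ((Matrix.posSemidef_conjTranspose_mul_self X).1.eigenvectorUnitary : Matrix n n ℂ) *
    diagonal ((↑) ∘ (√·) ∘ (Matrix.posSemidef_conjTranspose_mul_self X).1.eigenvalues) *
    (star (Matrix.posSemidef_conjTranspose_mul_self X).1.eigenvectorUnitary : Matrix n n ℂ)

/-- The trace norm `‖X‖₁ = trace |X|` (a real number). -/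
noncomputable def traceNorm {n : Type*} [Fintype n] [DecidableEq n] (X : Matrix n n ℂ) : ℝ :=
  ((matAbs X).trace).re

namespace TraceNormAux

variable {n : Type*} [Fintype n] [DecidableEq n]

open scoped MatrixOrder in
lemma matAbs_eq_sqrt (X : Matrix n n ℂ) : matAbs X = CFC.sqrt (Xᴴ * X) := by
  have hev := (posSemidef_conjTranspose_mul_self X).eigenvalues_nonneg
  rw [CFC.sqrt_eq_cfc, cfc_nnreal_eq_real _ (Xᴴ * X) (posSemidef_conjTranspose_mul_self X).nonneg,
    (posSemidef_conjTranspose_mul_self X).1.cfc_eq]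
  simp only [IsHermitian.cfc, matAbs]
  refine congrArg (· * _) (congrArg (_ * ·) (congrArg diagonal (funext fun i => ?_)))
  simp [max_eq_left (hev i)]

open scoped MatrixOrder in
lemma matAbs_unique {X S : Matrix n n ℂ} (hS : S.PosSemidef) (h : S ^ 2 = Xᴴ * X) :
    matAbs X = S := by
  rw [matAbs_eq_sqrt]
  exact CFC.sqrt_unique (by rw [← sq]; exact h) hS.nonneg

open scoped MatrixOrder in
lemma matAbs_posSemidef (X : Matrix n n ℂ) : (matAbs X).PosSemidef := by
  rw [matAbs_eq_sqrt]; exact (CFC.sqrt_nonneg _).posSemidef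

open scoped MatrixOrder in
lemma matAbs_mul_self (X : Matrix n n ℂ) : matAbs X * matAbs X = Xᴴ * X := by
  rw [matAbs_eq_sqrt]; exact CFC.sqrt_mul_sqrt_self _ (posSemidef_conjTranspose_mul_self X).nonneg

lemma matAbs_conj (U X : Matrix n n ℂ) (hU : Uᴴ * U = 1) :
    matAbs (Uᴴ * X * U) = Uᴴ * matAbs X * U := by
  have hU' : U * Uᴴ = 1 := mul_eq_one_comm.mp hU
  have hP : (matAbs X).PosSemidef := matAbs_posSemidef X
  have helper : ∀ M N : Matrix n n ℂ, (Uᴴ * M * U) * (Uᴴ * N * U) = Uᴴ * (M * N) * U := by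
    intro M N
    calc (Uᴴ * M * U) * (Uᴴ * N * U) = Uᴴ * M * (U * Uᴴ) * (N * U) := by
          simp only [Matrix.mul_assoc]
      _ = Uᴴ * (M * N) * U := by rw [hU']; simp only [Matrix.mul_one, Matrix.mul_assoc]
  refine matAbs_unique (hP.conjTranspose_mul_mul_same U) ?_
  have hsq : matAbs X * matAbs X = Xᴴ * X :=
    matAbs_mul_self X
  calc (Uᴴ * matAbs X * U) ^ 2
      = (Uᴴ * matAbs X * U) * (Uᴴ * matAbs X * U) := sq (Uᴴ * matAbs X * U)
    _ = Uᴴ * (Xᴴ * X) * U := by rw [helper, hsq]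
    _ = (Uᴴ * X * U)ᴴ * (Uᴴ * X * U) := by
        simp only [Matrix.conjTranspose_mul, Matrix.conjTranspose_conjTranspose,
          ← Matrix.mul_assoc]
        rw [Matrix.mul_assoc (Uᴴ * Xᴴ) U Uᴴ, hU', Matrix.mul_one]

lemma traceNorm_conj (U X : Matrix n n ℂ) (hU : Uᴴ * U = 1) :
    traceNorm (Uᴴ * X * U) = traceNorm X := by
  have hU' : U * Uᴴ = 1 := mul_eq_one_comm.mp hU
  rw [traceNorm, matAbs_conj U X hU, Matrix.trace_mul_cycle, hU', Matrix.one_mul, traceNorm]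

end TraceNormAux

set_option linter.unusedSectionVars false

section Sylvester

attribute [local instance] Matrix.frobeniusNormedRing Matrix.frobeniusNormedAlgebra

namespace TraceNormAux

variable {n : Type*} [Fintype n] [DecidableEq n]

/-- The Sylvester operator `H ↦ P * H + H * P` for `P = diagonal a`. -/
noncomputable def sylvLM (a : n → ℝ) : Matrix n n ℂ →ₗ[ℝ] Matrix n n ℂ :=
  LinearMap.mulLeft ℝ (Matrix.diagonal fun i => (a i : ℂ)) +
    LinearMap.mulRight ℝ (Matrix.diagonal fun i => (a i : ℂ))

lemma sylvLM_apply (a : n → ℝ) (H : Matrix n n ℂ) (i j : n) :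
    sylvLM a H i j = ((a i + a j : ℝ) : ℂ) * H i j := by
  simp only [sylvLM, LinearMap.add_apply, LinearMap.mulLeft_apply, LinearMap.mulRight_apply,
    Matrix.add_apply, Matrix.diagonal_mul, Matrix.mul_diagonal]
  push_cast
  ring

/-- The inverse of the Sylvester operator: entrywise division by `a i + a j`. -/
noncomputable def sylvInvLM (a : n → ℝ) : Matrix n n ℂ →ₗ[ℝ] Matrix n n ℂ where
  toFun K := Matrix.of fun i j => ((a i + a j)⁻¹ : ℝ) • K i j
  map_add' K L := by ext i j; simp [smul_add]
  map_smul' r K := by ext i j; simp [Matrix.of_apply, Complex.real_smul]; ring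

lemma sylvInvLM_apply (a : n → ℝ) (K : Matrix n n ℂ) (i j : n) :
    sylvInvLM a K i j = ((a i + a j)⁻¹ : ℝ) • K i j := rfl

lemma sylvInv_sylv (a : n → ℝ) (ha : ∀ i, 0 < a i) (H : Matrix n n ℂ) :
    sylvInvLM a (sylvLM a H) = H := by
  ext i j
  have h0 : (a i + a j) ≠ 0 := by have := ha i; have := ha j; positivity
  have h0c : ((a i : ℂ) + (a j : ℂ)) ≠ 0 := by exact_mod_cast h0
  rw [sylvInvLM_apply, sylvLM_apply, Complex.real_smul]
  push_cast
  field_simp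

lemma sylv_sylvInv (a : n → ℝ) (ha : ∀ i, 0 < a i) (K : Matrix n n ℂ) :
    sylvLM a (sylvInvLM a K) = K := by
  ext i j
  have h0 : (a i + a j) ≠ 0 := by have := ha i; have := ha j; positivity
  have h0c : ((a i : ℂ) + (a j : ℂ)) ≠ 0 := by exact_mod_cast h0
  rw [sylvLM_apply, sylvInvLM_apply, Complex.real_smul]
  push_cast
  field_simp

/-- The Sylvester operator as a continuous linear equivalence. -/
noncomputable def sylvEquiv (a : n → ℝ) (ha : ∀ i, 0 < a i) :
    Matrix n n ℂ ≃L[ℝ] Matrix n n ℂ :=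
  LinearEquiv.toContinuousLinearEquiv <|
    LinearEquiv.ofLinear (sylvLM a) (sylvInvLM a)
      (LinearMap.ext fun K => sylv_sylvInv a ha K)
      (LinearMap.ext fun H => sylvInv_sylv a ha H)

lemma sylvEquiv_apply (a : n → ℝ) (ha : ∀ i, 0 < a i) (H : Matrix n n ℂ) :
    sylvEquiv a ha H = sylvLM a H := rfl

/-- The squaring map has the Sylvester operator as derivative at `diagonal a`. -/
lemma hasFDerivAt_sq (a : n → ℝ) (ha : ∀ i, 0 < a i) :
    HasFDerivAt (fun X : Matrix n n ℂ => X * X)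
      (sylvEquiv a ha : Matrix n n ℂ →L[ℝ] Matrix n n ℂ)
      (Matrix.diagonal fun i => (a i : ℂ)) := by
  have h := (hasFDerivAt_id (𝕜 := ℝ) (Matrix.diagonal fun i => (a i : ℂ))).mul'
    (hasFDerivAt_id (𝕜 := ℝ) (Matrix.diagonal fun i => (a i : ℂ)))
  refine h.congr_fderiv ?_
  ext H : 1
  show _ = sylvLM a H
  rfl

end TraceNormAux

end Sylvester

namespace TraceNormAux

/-- A Hermitian matrix whose entries are close to a diagonal matrix with entries `≥ c > 0`
is positive definite. -/
lemma posDef_of_close {n : Type*} [Fintype n] [DecidableEq n] [Nonempty n]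
    (a : n → ℝ) (c : ℝ) (hc : 0 < c) (hca : ∀ i, c ≤ a i) (H : Matrix n n ℂ)
    (hH : H.IsHermitian)
    (hnear : ∀ i j, ‖(H - Matrix.diagonal (fun k => (a k : ℂ))) i j‖
        ≤ c / (2 * Fintype.card n)) :
    H.PosDef := by
  classical
  set N : ℕ := Fintype.card n with hNdef
  have hN : 0 < (N : ℝ) := by
    have := Fintype.card_pos (α := n)
    exact_mod_cast this
  set δ : ℝ := c / (2 * N) with hδdef
  have hδ : 0 ≤ δ := by positivity
  set P : Matrix n n ℂ := Matrix.diagonal (fun k => (a k : ℂ)) with hPdef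
  set K : Matrix n n ℂ := H - P with hKdef
  refine PosDef.of_dotProduct_mulVec_pos hH fun x hx => ?_
  set z := dotProduct (star x) (H *ᵥ x) with hzdef
  have hsym : ∀ i j, (starRingEnd ℂ) (H i j) = H j i := by
    intro i j
    conv_rhs => rw [← hH]
    simp [Matrix.conjTranspose_apply]
  have hz : z = ∑ i, ∑ j, (starRingEnd ℂ) (x i) * H i j * x j := by
    simp only [hzdef, dotProduct, Matrix.mulVec, Pi.star_apply, RCLike.star_def]
    refine Finset.sum_congr rfl fun i _ => ?_
    rw [Finset.mul_sum]
    refine Finset.sum_congr rfl fun j _ => by ring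
  have hconj : (starRingEnd ℂ) z = z := by
    calc (starRingEnd ℂ) z = ∑ i, ∑ j, x i * H j i * (starRingEnd ℂ) (x j) := by
          rw [hz, map_sum]
          refine Finset.sum_congr rfl fun i _ => ?_
          rw [map_sum]
          refine Finset.sum_congr rfl fun j _ => ?_
          simp only [_root_.map_mul, Complex.conj_conj, hsym]
      _ = z := by
          rw [hz, Finset.sum_comm]
          exact Finset.sum_congr rfl fun i _ => Finset.sum_congr rfl fun j _ => by ring
  have him : z.im = 0 := by
    have h2 := congrArg Complex.im hconj
    simp only [Complex.conj_im] at h2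
    linarith
  -- lower bound on the real part
  set ν : ℝ := ∑ i, Complex.normSq (x i) with hνdef
  have hν : 0 < ν := by
    have hxi : ∃ i, x i ≠ 0 := by
      by_contra h
      push_neg at h
      exact hx (funext fun i => h i)
    obtain ⟨i, hi⟩ := hxi
    refine Finset.sum_pos' (fun j _ => Complex.normSq_nonneg _) ⟨i, Finset.mem_univ i, ?_⟩
    exact Complex.normSq_pos.mpr hi
  have habs_sum : (∑ i, ‖x i‖) ^ 2 ≤ N * ν := by
    have := sq_sum_le_card_mul_sum_sq (s := Finset.univ) (f := fun i => ‖x i‖)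
    simpa [hνdef, Complex.sq_norm, hNdef] using this
  have hzsplit : z = dotProduct (star x) (P *ᵥ x)
      + dotProduct (star x) (K *ᵥ x) := by
    rw [hzdef, ← dotProduct_add, ← Matrix.add_mulVec, hKdef, add_sub_cancel]
  set zP := dotProduct (star x) (P *ᵥ x) with hzPdef
  set zK := dotProduct (star x) (K *ᵥ x) with hzKdef
  have hzPc : zP = ((∑ i, a i * Complex.normSq (x i) : ℝ) : ℂ) := by
    simp only [hzPdef, hPdef, dotProduct, Matrix.mulVec_diagonal, Pi.star_apply,
      RCLike.star_def]
    push_cast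
    refine Finset.sum_congr rfl fun i _ => ?_
    rw [Complex.normSq_eq_conj_mul_self]
    ring
  have hzPre : (∑ i, a i * Complex.normSq (x i)) ≥ c * ν := by
    rw [hνdef, Finset.mul_sum]
    refine Finset.sum_le_sum fun i _ => ?_
    exact mul_le_mul_of_nonneg_right (hca i) (Complex.normSq_nonneg _)
  have hzK_abs : ‖zK‖ ≤ δ * (N * ν) := by
    have step1 : ‖zK‖ ≤ ∑ i, ‖x i‖ * (δ * ∑ j, ‖x j‖) := by
      refine (norm_sum_le _ _).trans ?_
      refine Finset.sum_le_sum fun i _ => ?_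
      rw [norm_mul]
      simp only [Pi.star_apply, RCLike.star_def, Complex.norm_conj]
      refine mul_le_mul_of_nonneg_left ?_ (norm_nonneg _)
      refine (norm_sum_le _ _).trans ?_
      rw [Finset.mul_sum]
      refine Finset.sum_le_sum fun j _ => ?_
      rw [norm_mul]
      exact mul_le_mul_of_nonneg_right (hnear i j) (norm_nonneg _)
    calc ‖zK‖ ≤ ∑ i, ‖x i‖ * (δ * ∑ j, ‖x j‖) := step1
      _ = δ * (∑ i, ‖x i‖) ^ 2 := by rw [← Finset.sum_mul]; ring
      _ ≤ δ * (N * ν) := mul_le_mul_of_nonneg_left habs_sum hδ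
  have hzre : (0 : ℝ) < z.re := by
    have h1 : z.re = (∑ i, a i * Complex.normSq (x i)) + zK.re := by
      rw [hzsplit, Complex.add_re, hzPc, Complex.ofReal_re]
    have h2 : -(δ * (N * ν)) ≤ zK.re := by
      have h3 : |zK.re| ≤ δ * (N * ν) := (Complex.abs_re_le_norm zK).trans hzK_abs
      exact neg_le_of_abs_le h3
    have hδN : δ * N = c / 2 := by
      rw [hδdef]
      field_simp
    have : δ * (N * ν) = (c / 2) * ν := by rw [← mul_assoc, hδN]
    nlinarith [hzPre]
  rw [Complex.lt_def]
  exact ⟨by simpa using hzre, by simp [him]⟩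

end TraceNormAux

namespace TraceNormAux

lemma pair_identity (x y ν : ℝ) (hx : x ≠ 0) (hy : y ≠ 0) :
    |x|⁻¹ * ((1 - ((x + y) / (|x| + |y|)) ^ 2) * ν)
      + |y|⁻¹ * ((1 - ((x + y) / (|x| + |y|)) ^ 2) * ν)
    = (1 - Real.sign x * Real.sign y) * ν / (|x| + |y|)
      + (1 - Real.sign y * Real.sign x) * ν / (|y| + |x|) := by
  rcases hx.lt_or_gt with hx1 | hx1 <;> rcases hy.lt_or_gt with hy1 | hy1
  · rw [Real.sign_of_neg hx1, Real.sign_of_neg hy1, abs_of_neg hx1, abs_of_neg hy1]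
    have h1 : -x + -y ≠ 0 := by nlinarith
    field_simp
    try ring
  · rw [Real.sign_of_neg hx1, Real.sign_of_pos hy1, abs_of_neg hx1, abs_of_pos hy1]
    have h1 : -x + y ≠ 0 := by nlinarith
    have h2 : y + -x ≠ 0 := by nlinarith
    field_simp
    try ring
  · rw [Real.sign_of_pos hx1, Real.sign_of_neg hy1, abs_of_pos hx1, abs_of_neg hy1]
    have h1 : x + -y ≠ 0 := by nlinarith
    have h2 : -y + x ≠ 0 := by nlinarith
    field_simp
    try ring
  · rw [Real.sign_of_pos hx1, Real.sign_of_pos hy1, abs_of_pos hx1, abs_of_pos hy1]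
    have h1 : x + y ≠ 0 := by nlinarith
    field_simp
    try ring

end TraceNormAux

section Key

attribute [local instance] Matrix.frobeniusNormedRing Matrix.frobeniusNormedAlgebra

namespace TraceNormAux

theorem key {n : Type*} [Fintype n] [DecidableEq n] [Nonempty n]
    (lam : n → ℝ) (hlam : ∀ i, lam i ≠ 0) (W : Matrix n n ℂ) (hW : W.IsHermitian) :
    (∀ᶠ t in nhds (0 : ℝ), DifferentiableAt ℝ
        (fun t : ℝ => traceNorm (Matrix.diagonal (fun i => (lam i : ℂ)) + (t : ℂ) • W)) t) ∧
      HasDerivAt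
        (deriv (fun t : ℝ => traceNorm (Matrix.diagonal (fun i => (lam i : ℂ)) + (t : ℂ) • W)))
        (∑ i, ∑ j, (1 - Real.sign (lam i) * Real.sign (lam j)) *
            Complex.normSq (W i j) / (|lam i| + |lam j|)) 0 := by
  classical
  simp only [Complex.coe_smul]
  set a : n → ℝ := fun i => |lam i| with ha_def
  have ha : ∀ i, 0 < a i := fun i => abs_pos.mpr (hlam i)
  have ha' : ∀ i, a i ≠ 0 := fun i => (ha i).ne'
  set D : Matrix n n ℂ := Matrix.diagonal (fun i => (lam i : ℂ)) with hD_def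
  set f : ℝ → ℝ := fun t : ℝ => traceNorm (D + t • W) with hf_def
  set P : Matrix n n ℂ := Matrix.diagonal (fun i => (a i : ℂ)) with hP_def
  set M : ℝ → Matrix n n ℂ := fun t => D + t • W with hM_def
  set q : ℝ → Matrix n n ℂ := fun t => M t * M t with hq_def
  have hfM : f = fun t => traceNorm (M t) := rfl
  -- basic hermiticity facts
  have hDh : Dᴴ = D := by
    rw [hD_def, Matrix.diagonal_conjTranspose]
    have : (star fun i => ((lam i : ℝ) : ℂ)) = fun i => ((lam i : ℝ) : ℂ) :=
      funext fun i => Complex.conj_ofReal (lam i)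
    rw [this]
  have hPh : Pᴴ = P := by
    rw [hP_def, Matrix.diagonal_conjTranspose]
    have : (star fun i => ((a i : ℝ) : ℂ)) = fun i => ((a i : ℝ) : ℂ) :=
      funext fun i => Complex.conj_ofReal (a i)
    rw [this]
  have hMh : ∀ t, (M t)ᴴ = M t := by
    intro t
    rw [hM_def]
    simp only [Matrix.conjTranspose_add, Matrix.conjTranspose_smul, hDh, hW.eq, star_trivial]
  have hM0 : M 0 = D := by
    have h1 : M 0 = D + (0 : ℝ) • W := rfl
    rw [h1, zero_smul, add_zero]
  have hq0 : q 0 = P * P := by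
    have hq00 : q 0 = M 0 * M 0 := rfl
    rw [hq00, hM0, hD_def, hP_def, Matrix.diagonal_mul_diagonal, Matrix.diagonal_mul_diagonal]
    have : (fun i => ((lam i : ℝ) : ℂ) * ((lam i : ℝ) : ℂ))
        = fun i => ((a i : ℝ) : ℂ) * ((a i : ℝ) : ℂ) := by
      funext i
      rw [← Complex.ofReal_mul, ← Complex.ofReal_mul]
      exact congrArg _ (by rw [ha_def]; exact (abs_mul_abs_self (lam i)).symm)
    rw [this]
  -- smoothness
  have hMcd : ContDiff ℝ 3 M := by
    rw [hM_def]
    exact contDiff_const.add (contDiff_id.smul contDiff_const)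
  have hqcd : ContDiff ℝ 3 q := by
    rw [hq_def]
    exact hMcd.mul hMcd
  have hsqcd : ContDiff ℝ 3 (fun X : Matrix n n ℂ => X * X) := contDiff_id.mul contDiff_id
  have hder : HasFDerivAt (fun X : Matrix n n ℂ => X * X)
      ((sylvEquiv a ha : Matrix n n ℂ ≃L[ℝ] Matrix n n ℂ) :
        Matrix n n ℂ →L[ℝ] Matrix n n ℂ) P := by
    rw [hP_def]; exact hasFDerivAt_sq a ha
  have hsqP : ContDiffAt ℝ 3 (fun X : Matrix n n ℂ => X * X) P := hsqcd.contDiffAt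
  have h13 : (3 : WithTop ℕ∞) ≠ 0 := by norm_num
  have hstrict : HasStrictFDerivAt (fun X : Matrix n n ℂ => X * X)
      ((sylvEquiv a ha : Matrix n n ℂ ≃L[ℝ] Matrix n n ℂ) :
        Matrix n n ℂ →L[ℝ] Matrix n n ℂ) P := hsqP.hasStrictFDerivAt' hder h13
  set g : Matrix n n ℂ → Matrix n n ℂ := hstrict.localInverse _ _ _ with hg_def
  have hgcd : ContDiffAt ℝ 3 g (P * P) := hsqP.to_localInverse hder h13
  have hgP : g (P * P) = P := hstrict.localInverse_apply_image
  have hleft : ∀ᶠ x in nhds P, g (x * x) = x := hstrict.eventually_left_inverse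
  have hright : ∀ᶠ y in nhds (P * P), g y * g y = y := hstrict.eventually_right_inverse
  set X : ℝ → Matrix n n ℂ := fun t => g (q t) with hX_def
  have hXcd : ContDiffAt ℝ 3 X 0 := by
    have h1 : ContDiffAt ℝ 3 q 0 := hqcd.contDiffAt
    have h2 : ContDiffAt ℝ 3 g (q 0) := by rw [hq0]; exact hgcd
    exact h2.comp 0 h1
  have hX0 : X 0 = P := by
    have h1 : X 0 = g (q 0) := rfl
    rw [h1, hq0, hgP]
  -- eventual identities
  have hqt : Filter.Tendsto q (nhds 0) (nhds (P * P)) := by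
    rw [← hq0]; exact hqcd.continuous.continuousAt
  have hXX : ∀ᶠ t in nhds (0 : ℝ), X t * X t = q t := hqt.eventually hright
  have hXcont : Filter.Tendsto X (nhds 0) (nhds P) := by
    rw [← hX0]; exact hXcd.continuousAt
  have hCT : Continuous (fun A : Matrix n n ℂ => Aᴴ) := by
    let L : Matrix n n ℂ →ₗ[ℝ] Matrix n n ℂ :=
      { toFun := fun A => Aᴴ
        map_add' := fun A B => Matrix.conjTranspose_add A B
        map_smul' := fun r A => by
          ext i j
          simp [Matrix.conjTranspose_apply, star_smul] }
    exact L.continuous_of_finiteDimensional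
  have hXconjt : Filter.Tendsto (fun t => (X t)ᴴ) (nhds 0) (nhds P) := by
    have := (hCT.tendsto P).comp hXcont
    rwa [hPh] at this
  have hqh : ∀ t, (q t)ᴴ = q t := by
    intro t
    have h1 : q t = M t * M t := rfl
    rw [h1]
    simp only [Matrix.conjTranspose_mul, hMh]
  have hherm : ∀ᶠ t in nhds (0 : ℝ), (X t)ᴴ = X t := by
    have h1 : ∀ᶠ t in nhds (0 : ℝ), g ((X t)ᴴ * (X t)ᴴ) = (X t)ᴴ := hXconjt.eventually hleft
    have h2 : ∀ᶠ t in nhds (0 : ℝ), g (X t * X t) = X t := hXcont.eventually hleft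
    filter_upwards [h1, h2, hXX] with t h1t h2t hXXt
    have hcc : (X t)ᴴ * (X t)ᴴ = X t * X t := by
      calc (X t)ᴴ * (X t)ᴴ = (X t * X t)ᴴ := (Matrix.conjTranspose_mul _ _).symm
        _ = (q t)ᴴ := by rw [hXXt]
        _ = q t := hqh t
        _ = X t * X t := hXXt.symm
    rw [← h1t, hcc, h2t]
  -- eventual positive semidefiniteness
  have hne : (Finset.univ : Finset n).Nonempty := Finset.univ_nonempty
  set c : ℝ := Finset.univ.inf' hne a with hc_def
  have hc : 0 < c := by
    rw [hc_def, Finset.lt_inf'_iff]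
    exact fun i _ => ha i
  have hca : ∀ i, c ≤ a i := fun i => Finset.inf'_le a (Finset.mem_univ i)
  have hcard : (0 : ℝ) < Fintype.card n := by
    have := Fintype.card_pos (α := n); exact_mod_cast this
  have hPSD : ∀ᶠ t in nhds (0 : ℝ), (X t).PosSemidef := by
    have h2c : (0 : ℝ) < 2 * Fintype.card n := by nlinarith
    have hδpos : 0 < c / (2 * Fintype.card n) := div_pos hc h2c
    have hsub : Filter.Tendsto (fun t => X t - P) (nhds 0) (nhds 0) := by
      simpa using hXcont.sub (tendsto_const_nhds (x := P))
    have hent : ∀ᶠ t in nhds (0 : ℝ), ∀ i j,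
        ‖(X t - P) i j‖ ≤ c / (2 * Fintype.card n) := by
      refine Filter.eventually_all.mpr fun i => Filter.eventually_all.mpr fun j => ?_
      have hentryc : Continuous (fun A : Matrix n n ℂ => A i j) := by
        let L : Matrix n n ℂ →ₗ[ℝ] ℂ :=
          { toFun := fun A => A i j
            map_add' := fun _ _ => rfl
            map_smul' := fun _ _ => rfl }
        exact L.continuous_of_finiteDimensional
      have htend : Filter.Tendsto (fun t => (X t - P) i j) (nhds 0) (nhds 0) := by
        have := (hentryc.tendsto 0).comp hsub
        exact this
      have := Metric.tendsto_nhds.mp htend _ hδpos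
      filter_upwards [this] with t ht
      rw [dist_zero_right] at ht
      exact ht.le
    filter_upwards [hent, hherm] with t h1 h2
    exact (posDef_of_close a c hc hca (X t) h2 (by rw [← hP_def]; exact h1)).posSemidef
  -- identification with matAbs
  have hAbs : ∀ᶠ t in nhds (0 : ℝ), matAbs (M t) = X t := by
    filter_upwards [hXX, hherm, hPSD] with t h1 h2 h3
    refine matAbs_unique h3 ?_
    calc X t ^ 2 = X t * X t := sq (X t)
      _ = M t * M t := h1
      _ = (M t)ᴴ * M t := by rw [hMh t]
  -- the trace functional
  set TrCLM : Matrix n n ℂ →L[ℝ] ℝ :=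
    Complex.reCLM.comp (LinearMap.toContinuousLinearMap (Matrix.traceLinearMap n ℝ ℂ))
    with hTr_def
  have hTr_apply : ∀ B : Matrix n n ℂ, TrCLM B = B.trace.re := fun _ => rfl
  have hfeq : f =ᶠ[nhds (0 : ℝ)] fun t => TrCLM (X t) := by
    filter_upwards [hAbs] with t ht
    show traceNorm (M t) = TrCLM (X t)
    rw [traceNorm, ht, hTr_apply]
  have hhcd : ContDiffAt ℝ 3 (fun t => TrCLM (X t)) 0 :=
    TrCLM.contDiff.comp_contDiffAt 0 hXcd
  -- Part 1 : eventual differentiability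
  have part1 : ∀ᶠ t in nhds (0 : ℝ), DifferentiableAt ℝ f t := by
    have h1 : ∀ᶠ t in nhds (0 : ℝ), ContDiffAt ℝ 3 (fun t => TrCLM (X t)) t :=
      hhcd.eventually (by norm_num)
    have h2 : ∀ᶠ t in nhds (0 : ℝ), ∀ᶠ t' in nhds t, f t' = TrCLM (X t') :=
      hfeq.eventually_nhds
    filter_upwards [h1, h2] with t h1t h2t
    exact (h1t.differentiableAt (by norm_num)).congr_of_eventuallyEq h2t
  -- Part 2 : second derivative computation
  obtain ⟨s, hs_mem, hscd⟩ := hXcd.contDiffOn le_rfl (by norm_num)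
  set o := interior s with ho_def
  have ho : IsOpen o := isOpen_interior
  have h0o : (0 : ℝ) ∈ o := mem_interior_iff_mem_nhds.mpr hs_mem
  have hXo : ContDiffOn ℝ 3 X o := hscd.mono interior_subset
  have hXdiff : ∀ t ∈ o, HasDerivAt X (deriv X t) t := by
    intro t ht
    exact ((hXo.differentiableOn (by norm_num)).differentiableAt (ho.mem_nhds ht)).hasDerivAt
  set Y := deriv X with hY_def
  have hYcd : ContDiffOn ℝ 2 Y o := by
    have := hXo.deriv_of_isOpen ho (show (2 : WithTop ℕ∞) + 1 ≤ 3 by norm_num)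
    exact this
  have hY0d : DifferentiableAt ℝ Y 0 :=
    (hYcd.differentiableOn (by norm_num)).differentiableAt (ho.mem_nhds h0o)
  set Z := deriv Y 0 with hZ_def
  have hYZ : HasDerivAt Y Z 0 := hY0d.hasDerivAt
  set Y₀ := Y 0 with hY₀_def
  have hXd0 : HasDerivAt X Y₀ 0 := hXdiff 0 h0o
  have hMd : ∀ t, HasDerivAt M W t := by
    intro t
    rw [hM_def]
    have h2 := ((hasDerivAt_id t).smul_const W).const_add D
    simp only [id_eq, one_smul] at h2
    exact h2
  have hqd : ∀ t, HasDerivAt q (W * M t + M t * W) t := by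
    intro t
    have h1 := (hMd t).mul (hMd t)
    rw [hq_def]
    exact h1
  have hSylv1 : ∀ᶠ t in nhds (0 : ℝ), Y t * X t + X t * Y t = W * M t + M t * W := by
    filter_upwards [hXX.eventually_nhds, ho.eventually_mem h0o] with t hXXt hto
    have hd1 : HasDerivAt (fun t' => X t' * X t') (Y t * X t + X t * Y t) t :=
      (hXdiff t hto).mul (hXdiff t hto)
    have hd2 : HasDerivAt q (Y t * X t + X t * Y t) t :=
      hd1.congr_of_eventuallyEq (hXXt.mono fun t' e => e.symm)
    exact hd2.unique (hqd t)
  have hSylv0 : Y₀ * P + P * Y₀ = W * D + D * W := by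
    have h := hSylv1.self_of_nhds
    rw [hX0, hM0] at h
    exact h
  have hY₀eq : Y₀ = sylvInvLM a (W * D + D * W) := by
    have h1 : sylvLM a Y₀ = W * D + D * W := by
      have h2 : sylvLM a Y₀ = P * Y₀ + Y₀ * P := rfl
      rw [h2, add_comm]
      exact hSylv0
    calc Y₀ = sylvInvLM a (sylvLM a Y₀) := (sylvInv_sylv a ha Y₀).symm
      _ = _ := by rw [h1]
  have hZeq' : Z * X 0 + Y 0 * Y 0 + (Y 0 * Y 0 + X 0 * Z) = W * W + W * W := by
    have hd1 : HasDerivAt (fun t => Y t * X t + X t * Y t)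
        (Z * X 0 + Y 0 * Y 0 + (Y 0 * Y 0 + X 0 * Z)) 0 :=
      (hYZ.mul hXd0).add (hXd0.mul hYZ)
    have hd2 : HasDerivAt (fun t => W * M t + M t * W) (W * W + W * W) 0 := by
      have e1 : HasDerivAt (fun t => W * M t) (W * W) 0 := (hMd 0).const_mul W
      have e2 : HasDerivAt (fun t => M t * W) (W * W) 0 := (hMd 0).mul_const W
      exact e1.add e2
    exact (hd1.congr_of_eventuallyEq (hSylv1.mono fun t e => e.symm)).unique hd2
  have hZeq : sylvLM a Z = W * W + W * W - (Y₀ * Y₀ + Y₀ * Y₀) := by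
    have h2 : sylvLM a Z = P * Z + Z * P := rfl
    rw [hX0] at hZeq'
    rw [h2, eq_sub_iff_add_eq, ← hZeq']
    abel
  have hZinv : Z = sylvInvLM a (W * W + W * W - (Y₀ * Y₀ + Y₀ * Y₀)) := by
    calc Z = sylvInvLM a (sylvLM a Z) := (sylvInv_sylv a ha Z).symm
      _ = _ := by rw [hZeq]
  -- derivative of f near 0
  have hderivf : deriv f =ᶠ[nhds (0 : ℝ)] fun t => TrCLM (Y t) := by
    have h1 : deriv f =ᶠ[nhds (0 : ℝ)] deriv (fun t => TrCLM (X t)) := hfeq.deriv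
    refine h1.trans ?_
    filter_upwards [ho.eventually_mem h0o] with t hto
    exact (TrCLM.hasFDerivAt.comp_hasDerivAt t (hXdiff t hto)).deriv
  have hfinal : HasDerivAt (deriv f) (TrCLM Z) 0 := by
    have h2 : HasDerivAt (fun t => TrCLM (Y t)) (TrCLM Z) 0 :=
      TrCLM.hasFDerivAt.comp_hasDerivAt 0 hYZ
    exact h2.congr_of_eventuallyEq hderivf
  -- final sum computation
  have hWsym : ∀ i j, W j i = (starRingEnd ℂ) (W i j) := by
    intro i j
    conv_lhs => rw [← hW]
    simp [Matrix.conjTranspose_apply]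
  set r : n → n → ℝ := fun i j => (lam i + lam j) / (a i + a j) with hr_def
  have hrsymm : ∀ i j, r j i = r i j := by
    intro i j
    simp only [hr_def]
    rw [add_comm (lam j) (lam i), add_comm (a j) (a i)]
  have hY₀e : ∀ i j, Y₀ i j = ((r i j : ℝ) : ℂ) * W i j := by
    intro i j
    rw [hY₀eq, sylvInvLM_apply]
    have hDe : (W * D + D * W) i j = ((lam i + lam j : ℝ) : ℂ) * W i j := by
      rw [Matrix.add_apply, hD_def, Matrix.mul_diagonal, Matrix.diagonal_mul]
      push_cast
      ring
    have h0 : a i + a j ≠ 0 := by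
      have := ha i; have := ha j; intro hcon; linarith
    have h0c : ((a i : ℂ) + (a j : ℂ)) ≠ 0 := by exact_mod_cast h0
    rw [hDe, Complex.real_smul, hr_def]
    push_cast
    field_simp
  have hWW : ∀ i, (W * W) i i = ((∑ j, Complex.normSq (W i j) : ℝ) : ℂ) := by
    intro i
    rw [Matrix.mul_apply]
    push_cast
    refine Finset.sum_congr rfl fun j _ => ?_
    rw [hWsym i j, Complex.mul_conj]
  have hYY : ∀ i, (Y₀ * Y₀) i i
      = ((∑ j, r i j ^ 2 * Complex.normSq (W i j) : ℝ) : ℂ) := by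
    intro i
    rw [Matrix.mul_apply]
    push_cast
    refine Finset.sum_congr rfl fun j _ => ?_
    rw [hY₀e i j, hY₀e j i, hrsymm i j, hWsym i j]
    calc ((r i j : ℝ) : ℂ) * W i j * (((r i j : ℝ) : ℂ) * (starRingEnd ℂ) (W i j))
        = (((r i j : ℝ) : ℂ)) ^ 2 * (W i j * (starRingEnd ℂ) (W i j)) := by ring
      _ = ((r i j : ℝ) : ℂ) ^ 2 * (Complex.normSq (W i j) : ℂ) := by rw [Complex.mul_conj]
      _ = _ := by norm_cast
  have hZii : ∀ i, (Z i i).re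
      = ∑ j, (a i)⁻¹ * ((1 - r i j ^ 2) * Complex.normSq (W i j)) := by
    intro i
    have hZiiC : Z i i = (((a i + a i)⁻¹ *
        ((∑ j, Complex.normSq (W i j)) + (∑ j, Complex.normSq (W i j))
          - ((∑ j, r i j ^ 2 * Complex.normSq (W i j))
            + (∑ j, r i j ^ 2 * Complex.normSq (W i j)))) : ℝ) : ℂ) := by
      rw [hZinv, sylvInvLM_apply, Matrix.sub_apply, Matrix.add_apply, Matrix.add_apply,
        hWW i, hYY i, Complex.real_smul]
      push_cast
      ring
    rw [hZiiC, Complex.ofReal_re]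
    rw [← Finset.sum_add_distrib, ← Finset.sum_add_distrib, ← Finset.sum_sub_distrib,
      Finset.mul_sum]
    refine Finset.sum_congr rfl fun j _ => ?_
    have h0 : a i ≠ 0 := ha' i
    have h00 : a i + a i ≠ 0 := by have := ha i; intro hcon; linarith
    field_simp
  set A : n → n → ℝ := fun i j => (a i)⁻¹ * ((1 - r i j ^ 2) * Complex.normSq (W i j))
    with hA_def
  set B : n → n → ℝ := fun i j => (1 - Real.sign (lam i) * Real.sign (lam j)) *
      Complex.normSq (W i j) / (a i + a j) with hB_def
  have hTrZ : TrCLM Z = ∑ i, ∑ j, A i j := by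
    rw [hTr_apply, Matrix.trace, Complex.re_sum]
    exact Finset.sum_congr rfl fun i _ => hZii i
  have hνsymm : ∀ i j : n, Complex.normSq (W j i) = Complex.normSq (W i j) := by
    intro i j
    rw [hWsym i j, Complex.normSq_conj]
  have hpair : ∀ i j, A i j + A j i = B i j + B j i := by
    intro i j
    have hpi := pair_identity (lam i) (lam j) (Complex.normSq (W i j)) (hlam i) (hlam j)
    simp only [hA_def, hB_def]
    rw [hνsymm i j, hrsymm i j]
    simp only [hr_def, ha_def]
    exact hpi
  have hsum : (∑ i, ∑ j, A i j) = ∑ i, ∑ j, B i j := by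
    have e1 : (∑ i, ∑ j, A j i) = ∑ i, ∑ j, A i j := Finset.sum_comm
    have e2 : (∑ i, ∑ j, B j i) = ∑ i, ∑ j, B i j := Finset.sum_comm
    have hh : (∑ i, ∑ j, (A i j + A j i)) = ∑ i, ∑ j, (B i j + B j i) :=
      Finset.sum_congr rfl fun i _ => Finset.sum_congr rfl fun j _ => hpair i j
    simp only [Finset.sum_add_distrib] at hh
    rw [e1, e2] at hh
    linarith
  refine ⟨part1, ?_⟩
  have hS : TrCLM Z = ∑ i, ∑ j, (1 - Real.sign (lam i) * Real.sign (lam j)) *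
      Complex.normSq (W i j) / (|lam i| + |lam j|) := by
    rw [hTrZ, hsum]
  exact hS ▸ hfinal

end TraceNormAux

end Key


open TraceNormAux

/-- **Second derivative (Hessian) of the trace norm at an invertible Hermitian matrix.**
Let `A` be an invertible Hermitian matrix with nonzero real eigenvalues `lam i` and an
orthonormal eigenbasis `u i`, and let `V` be Hermitian. Then `t ↦ ‖A + t·V‖₁` is twice
differentiable at `0` with second derivative
`Σ_{i,j} (1 − sgn(lam i)·sgn(lam j))·|⟨u i, V·u j⟩|²/(|lam i| + |lam j|)`;
in particular it vanishes when `A` is positive definite. -/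
theorem traceNorm_second_deriv {n : Type*} [Fintype n] [DecidableEq n] [Nonempty n]
    (A V : Matrix n n ℂ) (hA : A.IsHermitian) (hV : V.IsHermitian) (hinv : IsUnit A)
    (lam : n → ℝ) (u : n → n → ℂ)
    (hlam : ∀ i, lam i ≠ 0)
    (hortho : ∀ i j, star (u i) ⬝ᵥ u j = if i = j then 1 else 0)
    (heig : ∀ i, A *ᵥ u i = (lam i : ℂ) • u i) :
    (∀ᶠ t in nhds (0 : ℝ),
        DifferentiableAt ℝ (fun t : ℝ => traceNorm (A + (t : ℂ) • V)) t) ∧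
      HasDerivAt (deriv (fun t : ℝ => traceNorm (A + (t : ℂ) • V)))
        (∑ i, ∑ j,
          (1 - Real.sign (lam i) * Real.sign (lam j)) *
            Complex.normSq (star (u i) ⬝ᵥ (V *ᵥ u j)) / (|lam i| + |lam j|)) 0 ∧
      (A.PosDef →
        (∑ i, ∑ j,
          (1 - Real.sign (lam i) * Real.sign (lam j)) *
            Complex.normSq (star (u i) ⬝ᵥ (V *ᵥ u j)) / (|lam i| + |lam j|)) = 0) := by
  classical
  set U : Matrix n n ℂ := Matrix.of (fun k j => u j k) with hU_def
  have hUU : Uᴴ * U = 1 := by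
    ext i j
    have h := hortho i j
    simp only [dotProduct, Pi.star_apply] at h
    simpa [Matrix.mul_apply, Matrix.conjTranspose_apply, hU_def, Matrix.one_apply] using h
  set D : Matrix n n ℂ := Matrix.diagonal (fun i => (lam i : ℂ)) with hD_def
  set Wm : Matrix n n ℂ := Uᴴ * V * U with hW_def
  have hAU : A * U = U * D := by
    ext k j
    have h := congrFun (heig j) k
    simp only [Matrix.mulVec, dotProduct, Pi.smul_apply, smul_eq_mul] at h
    have hUD : (U * D) k j = u j k * (lam j : ℂ) := by
      rw [hD_def, Matrix.mul_diagonal, hU_def]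
      rfl
    rw [hUD, Matrix.mul_apply]
    simp only [hU_def, Matrix.of_apply]
    rw [h]
    ring
  have hUAU : Uᴴ * A * U = D := by
    rw [Matrix.mul_assoc, hAU, ← Matrix.mul_assoc, hUU, Matrix.one_mul]
  have hWherm : Wm.IsHermitian := by
    show Wmᴴ = Wm
    rw [hW_def]
    simp only [Matrix.conjTranspose_mul, Matrix.conjTranspose_conjTranspose, hV.eq,
      Matrix.mul_assoc]
  have hconj : ∀ t : ℝ, Uᴴ * (A + (t : ℂ) • V) * U = D + (t : ℂ) • Wm := by
    intro t
    rw [hW_def]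
    rw [Matrix.mul_add, Matrix.add_mul, hUAU, mul_smul_comm, smul_mul_assoc]
  have hfun : (fun t : ℝ => traceNorm (A + (t : ℂ) • V)) = fun t : ℝ =>
      traceNorm (Matrix.diagonal (fun i => (lam i : ℂ)) + (t : ℂ) • Wm) := by
    funext t
    rw [← hD_def, ← hconj t, traceNorm_conj U _ hUU]
  have hWe : ∀ i j, star (u i) ⬝ᵥ (V *ᵥ u j) = Wm i j := by
    intro i j
    rw [hW_def, Matrix.mul_assoc, Matrix.mul_apply]
    simp only [Matrix.conjTranspose_apply, hU_def, Matrix.of_apply, dotProduct,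
      Pi.star_apply]
    refine Finset.sum_congr rfl fun k _ => ?_
    congr 1
  obtain ⟨p1, p2⟩ := key lam hlam Wm hWherm
  refine ⟨?_, ?_, ?_⟩
  · rw [hfun]
    exact p1
  · rw [hfun]
    simp only [hWe]
    exact p2
  · intro hposdef
    have hpos : ∀ i, 0 < lam i := by
      intro i
      have hu : u i ≠ 0 := by
        intro h0
        have h1 := hortho i i
        rw [h0] at h1
        simp [dotProduct] at h1
      have h2 := hposdef.dotProduct_mulVec_pos hu
      rw [heig i] at h2
      rw [dotProduct_smul, hortho i i] at h2
      simp at h2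
      exact_mod_cast h2
    refine Finset.sum_eq_zero fun i _ => Finset.sum_eq_zero fun j _ => ?_
    rw [Real.sign_of_pos (hpos i), Real.sign_of_pos (hpos j)]
    simp
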